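/- Let k be a field, L a field extension of k, and g₁, g₂ commuting k-algebra automorphisms of L. Let q₁₁, q₁₂, q₂₁ ∈ kˣ with q₁₁·q₁₂·q₂₁ = 1, and let w₁, w₂ ∈ L satisfy g₁(w₁) = q₁₁·w₁, g₁(w₂) = q₁₂·w₂, and g₂(w₁) = q₂₁·w₁. Define X_i : L → L by X_i(a) = w_i·(a − g_i(a)). Then, as k-linear operators on L, X₁²X₂ − (q₁₁q₁₂ + q₁₂)·X₁X₂X₁ + q₁₁q₁₂²·X₂X₁² equals the map a ↦ (1 − q₁₁q₁₂)(q₁₂ − 1)·w₁²w₂·(g₁(g₁(g₂(a))) − a). -/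

import Mathlib

/-- The key simplification in the proof of Theorem 5.5: if `q₁₁q₁₂q₂₁ = 1`, the
quantum Serre relation acts by `(1−q₁₁q₁₂)(q₁₂−1)·w₁²w₂·(g₁²g₂ − 1)`. -/
theorem stmt_10 (k L : Type*) [Field k] [Field L] [Algebra k L]
    (g₁ g₂ : L ≃ₐ[k] L) (hcomm : ∀ a : L, g₁ (g₂ a) = g₂ (g₁ a))
    (q₁₁ q₁₂ q₂₁ : k) (hq : q₁₁ * q₁₂ * q₂₁ = 1)
    (w₁ w₂ : L)
    (h₁₁ : g₁ w₁ = algebraMap k L q₁₁ * w₁)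
    (h₁₂ : g₁ w₂ = algebraMap k L q₁₂ * w₂)
    (h₂₁ : g₂ w₁ = algebraMap k L q₂₁ * w₁)
    (X₁ X₂ : L → L)
    (hX₁ : ∀ a : L, X₁ a = w₁ * (a - g₁ a))
    (hX₂ : ∀ a : L, X₂ a = w₂ * (a - g₂ a)) :
    ∀ a : L,
      X₁ (X₁ (X₂ a)) - algebraMap k L (q₁₁ * q₁₂ + q₁₂) * X₁ (X₂ (X₁ a))
          + algebraMap k L (q₁₁ * q₁₂ ^ 2) * X₂ (X₁ (X₁ a)) =
      algebraMap k L ((1 - q₁₁ * q₁₂) * (q₁₂ - 1)) * (w₁ ^ 2 * w₂)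
        * (g₁ (g₁ (g₂ a)) - a) := by
  intro a
  have h1 : algebraMap k L q₁₁ * algebraMap k L q₁₂ * algebraMap k L q₂₁ = 1 := by
    rw [← map_mul, ← map_mul, hq, map_one]
  have hAB : algebraMap k L q₁₁ * algebraMap k L q₁₂ ≠ 0 := by
    intro h; rw [h, zero_mul] at h1; exact one_ne_zero h1.symm
  have hC : algebraMap k L q₂₁ = (algebraMap k L q₁₁ * algebraMap k L q₁₂)⁻¹ :=
    eq_inv_of_mul_eq_one_left (by rw [mul_comm]; exact h1)
  simp only [hX₁, hX₂, map_mul, map_sub, h₁₁, h₁₂, h₂₁, hcomm, map_add, map_one, map_pow,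
    AlgEquiv.commutes]
  rw [hC]
  field_simp [left_ne_zero_of_mul hAB, right_ne_zero_of_mul hAB]
  ring
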